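/- The min-first sequential rule violates weak line-up enlargement monotonicity: there is an election with 6 candidates and 4 positions whose unique min-first winner assigns a set of candidates that is not contained in the set of candidates of the unique min-first winner after adding a fifth position. -/

import Mathlib

open Function

section Defs

variable {C P : Type*}

/-- Utilitarian (summed) score of a line-up. -/
def utilScore [Fintype P] (S : C → P → ℚ) (π : P → C) : ℚ := ∑ p, S (π p) p

/-- Winner under the utilitarian rule. -/
def IsUtilWinner [Fintype P] (S : C → P → ℚ) (π : P → C) : Prop :=
  Function.Injective π ∧
    ∀ π' : P → C, Function.Injective π' → utilScore S π' ≤ utilScore S π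

/-- Egalitarian (minimum) score of a line-up. -/
def egalScore [Fintype P] [Nonempty P] (S : C → P → ℚ) (π : P → C) : ℚ :=
  Finset.univ.inf' Finset.univ_nonempty (fun p => S (π p) p)

/-- Winner under the egalitarian rule. -/
def IsEgalWinner [Fintype P] [Nonempty P] (S : C → P → ℚ) (π : P → C) : Prop :=
  Function.Injective π ∧
    ∀ π' : P → C, Function.Injective π' → egalScore S π' ≤ egalScore S π

/-- Outcome of the sequential rule that fills positions in increasing order of the
priority `r`: each position receives a best candidate among those not assigned to
an earlier position. -/
def FixedOrderOutcome (r : P → ℕ) (S : C → P → ℚ) (π : P → C) : Prop :=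
  Function.Injective π ∧
    ∀ p : P, ∀ c : C, (∀ p' : P, r p' < r p → c ≠ π p') → S c p ≤ S (π p) p

/-- Outcome of some sequential rule: positions are filled one at a time in some order,
each receiving a best remaining candidate. -/
def SeqOutcome (S : C → P → ℚ) (π : P → C) : Prop :=
  ∃ r : P → ℕ, Function.Injective r ∧ FixedOrderOutcome r S π

/-- Outcome of the max-first rule along the order `r`: at each step the assigned
candidate-position pair has maximal score among all remaining pairs. -/
def MaxFirstOrder (r : P → ℕ) (S : C → P → ℚ) (π : P → C) : Prop :=
  Function.Injective π ∧
    ∀ p p'' : P, r p ≤ r p'' → ∀ c : C,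
      (∀ p' : P, r p' < r p → c ≠ π p') → S c p'' ≤ S (π p) p

/-- Outcome of the max-first sequential rule. -/
def MaxFirstOutcome (S : C → P → ℚ) (π : P → C) : Prop :=
  ∃ r : P → ℕ, Function.Injective r ∧ MaxFirstOrder r S π

/-- Outcome of the min-first rule along the order `r`: at each step the filled
position is one whose best remaining candidate score is smallest among the remaining
positions, and it receives a best remaining candidate. -/
def MinFirstOrder (r : P → ℕ) (S : C → P → ℚ) (π : P → C) : Prop :=
  Function.Injective π ∧
    (∀ p : P, ∀ c : C, (∀ p' : P, r p' < r p → c ≠ π p') → S c p ≤ S (π p) p) ∧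
    (∀ p p'' : P, r p ≤ r p'' →
      ∃ c : C, (∀ p' : P, r p' < r p → c ≠ π p') ∧ S (π p) p ≤ S c p'')

/-- Outcome of the min-first sequential rule. -/
def MinFirstOutcome (S : C → P → ℚ) (π : P → C) : Prop :=
  ∃ r : P → ℕ, Function.Injective r ∧ MinFirstOrder r S π

/-- A line-up is reasonably satisfying if (i) there are no two positions `p, p'` with
`score_p(π_{p'}) > score_p(π_p)` and `score_p(π_{p'}) > score_{p'}(π_{p'})`, and
(ii) no unassigned candidate scores higher on some position than its occupant. -/
def ReasonablySatisfying (S : C → P → ℚ) (π : P → C) : Prop :=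
  (¬ ∃ p p' : P, S (π p') p > S (π p) p ∧ S (π p') p > S (π p') p') ∧
  (¬ ∃ (c : C) (p : P), c ∉ Set.range π ∧ S c p > S (π p) p)

/-- A line-up is score Pareto optimal if no line-up is at least as good on every
position and strictly better on some position. -/
def ScoreParetoOptimal (S : C → P → ℚ) (π : P → C) : Prop :=
  ¬ ∃ π' : P → C, Function.Injective π' ∧
      (∀ p : P, S (π p) p ≤ S (π' p) p) ∧ (∃ p : P, S (π p) p < S (π' p) p)

/-- The entries of `v` sorted in decreasing order; `sortedDesc v i` is the
`(i+1)`-st largest entry of `v`. -/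
def sortedDesc {n : ℕ} (v : Fin n → ℚ) : Fin n → ℚ :=
  v ∘ (Tuple.sort (fun i => -v i))

/-- Ordered weighted average of `v` with OWA-vector `Λ`. -/
def owa {n : ℕ} (Λ : Fin n → ℚ) (v : Fin n → ℚ) : ℚ :=
  ∑ i, Λ i * sortedDesc v i

/-- The score vector of a line-up. -/
def scoreVec {q : ℕ} (S : C → Fin q → ℚ) (π : Fin q → C) : Fin q → ℚ :=
  fun p => S (π p) p

/-- Winner under the OWA-rule `f^Λ`. -/
def IsOWAWinner {q : ℕ} (Λ : Fin q → ℚ) (S : C → Fin q → ℚ) (π : Fin q → C) : Prop :=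
  Function.Injective π ∧
    ∀ π' : Fin q → C, Function.Injective π' →
      owa Λ (scoreVec S π') ≤ owa Λ (scoreVec S π)

end Defs

namespace Stmt19Aux

def N4 : Fin 6 → Fin 4 → ℕ := ![![0,6,4,0], ![2,3,0,0], ![7,0,0,5], ![1,0,0,0], ![0,0,0,1], ![0,1,0,0]]
def N5 : Fin 6 → Fin 5 → ℕ := ![![0,6,4,0,0], ![2,3,0,0,0], ![7,0,0,5,1], ![1,0,0,0,0], ![0,0,0,1,0], ![0,1,0,0,0]]
def S4q : Fin 6 → Fin 4 → ℚ := fun c p => (N4 c p : ℚ)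
def S5q : Fin 6 → Fin 5 → ℚ := fun c p => (N5 c p : ℚ)

lemma stepLemma {n : ℕ} {N : Fin 6 → Fin n → ℕ} {r : Fin n → ℕ} (hr : Function.Injective r)
    {π : Fin n → Fin 6}
    (h1 : ∀ p, ∀ c, (∀ p', r p' < r p → c ≠ π p') → N c p ≤ N (π p) p)
    (h3 : ∀ p p'', r p ≤ r p'' → ∃ c, (∀ p', r p' < r p → c ≠ π p') ∧ N (π p) p ≤ N c p'')
    (D R : Finset (Fin n)) (hDR : ∀ p, p ∉ D → p ∈ R)
    (hlt : ∀ q ∈ D, ∀ p ∈ R, r q < r p) (hne : R.Nonempty) :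
    ∃ p ∈ R, (∀ p' ∈ R, p' ≠ p → r p < r p') ∧
      (∀ c, (∀ q ∈ D, c ≠ π q) → N c p ≤ N (π p) p) ∧
      (∀ p'' ∈ R, ∃ c, (∀ q ∈ D, c ≠ π q) ∧ N (π p) p ≤ N c p'') := by
  obtain ⟨p, hpR, hmin⟩ := R.exists_min_image r hne
  refine ⟨p, hpR, ?_, ?_, ?_⟩
  · intro p' hp' hnep
    exact lt_of_le_of_ne (hmin p' hp') (fun h => hnep (hr h).symm)
  · intro c hc
    apply h1
    intro p' hp'lt
    by_cases hD : p' ∈ D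
    · exact hc p' hD
    · exact absurd hp'lt (not_lt.mpr (hmin p' (hDR p' hD)))
  · intro p'' hp''
    obtain ⟨c, hg, hcb⟩ := h3 p p'' (hmin p'' hp'')
    exact ⟨c, fun q hq => hg q (hlt q hq p hpR), hcb⟩

end Stmt19Aux

open Stmt19Aux


/-- The min-first rule violates weak line-up enlargement monotonicity: there is an
election with 6 candidates and 4 positions whose unique min-first winner uses a set
of candidates not contained in that of the unique winner after adding a fifth
position (scores on the old positions unchanged). -/
theorem stmt19 : ∃ (S4 : Fin 6 → Fin 4 → ℚ) (S5 : Fin 6 → Fin 5 → ℚ),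
    (∀ (c : Fin 6) (p : Fin 4), S5 c p.castSucc = S4 c p) ∧
    ∃ (π4 : Fin 4 → Fin 6) (π5 : Fin 5 → Fin 6),
      (∀ π : Fin 4 → Fin 6, MinFirstOutcome S4 π ↔ π = π4) ∧
      (∀ π : Fin 5 → Fin 6, MinFirstOutcome S5 π ↔ π = π5) ∧
      ¬ (Set.range π4 ⊆ Set.range π5) := by
  refine ⟨S4q, S5q, ?_, ![3,1,0,2], ![1,5,0,4,2], ?_, ?_, ?_⟩
  · have h : ∀ (c : Fin 6) (p : Fin 4), N5 c p.castSucc = N4 c p := by decide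
    intro c p
    simp only [S4q, S5q]
    exact_mod_cast h c p
  · intro π
    constructor
    · rintro ⟨r, hr, hinj, h1q, h3q⟩
      simp only [S4q] at h1q h3q
      have h1 : ∀ p, ∀ c, (∀ p', r p' < r p → c ≠ π p') → N4 c p ≤ N4 (π p) p := by
        intro p c g; exact_mod_cast h1q p c g
      have h3 : ∀ p p'', r p ≤ r p'' → ∃ c, (∀ p', r p' < r p → c ≠ π p') ∧ N4 (π p) p ≤ N4 c p'' := by
        intro p p'' h
        obtain ⟨c, g, hb⟩ := h3q p p'' h
        exact ⟨c, g, by exact_mod_cast hb⟩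
      have hlt0 : ∀ q ∈ (∅ : Finset (Fin 4)), ∀ p ∈ ({0,1,2,3} : Finset (Fin 4)), r q < r p := by
        intro q hq; exact absurd hq (Finset.notMem_empty q)
      have key0 : ∀ p ∈ ({0,1,2,3} : Finset (Fin 4)), ∀ v : Fin 6, v ∉ ([] : List (Fin 6)) →
          (∀ c : Fin 6, c ∉ ([] : List (Fin 6)) → N4 c p ≤ N4 v p) →
          (∀ p'' ∈ ({0,1,2,3} : Finset (Fin 4)), ∃ c : Fin 6, c ∉ ([] : List (Fin 6)) ∧ N4 v p ≤ N4 c p'') →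
          p = 2 ∧ v = 0 := by decide
      obtain ⟨p, hpR, hmin, hbest, hbnd⟩ := stepLemma hr h1 h3 (∅ : Finset (Fin 4)) ({0,1,2,3} : Finset (Fin 4)) (by decide) hlt0 ⟨0, by decide⟩
      have hvE0 : π p ∉ ([] : List (Fin 6)) := List.not_mem_nil
      have hbest0 : ∀ c : Fin 6, c ∉ ([] : List (Fin 6)) → N4 c p ≤ N4 (π p) p := by
        intro c hcE
        apply hbest
        intro q hq
        exact absurd hq (Finset.notMem_empty q)
      have hbnd0 : ∀ p'' ∈ ({0,1,2,3} : Finset (Fin 4)), ∃ c : Fin 6, c ∉ ([] : List (Fin 6)) ∧ N4 (π p) p ≤ N4 c p'' := by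
        intro p'' hp''
        obtain ⟨c, hcg, hcb⟩ := hbnd p'' hp''
        refine ⟨c, ?_, hcb⟩
        exact List.not_mem_nil
      obtain ⟨hpeq, hval2⟩ := key0 p hpR (π p) hvE0 hbest0 hbnd0
      subst hpeq
      have hlt1 : ∀ q ∈ ({2} : Finset (Fin 4)), ∀ p' ∈ ({0,1,3} : Finset (Fin 4)), r q < r p' := by
        intro q hq p' hp'
        have hp'R : p' ∈ ({0,1,2,3} : Finset (Fin 4)) := Finset.mem_of_subset (by decide) hp'
        have hp'ne : p' ≠ 2 := fun h => absurd (h ▸ hp') (by decide)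
        fin_cases hq
        · exact hmin p' hp'R hp'ne
      clear hmin hbest hbnd hpR
      have key1 : ∀ p ∈ ({0,1,3} : Finset (Fin 4)), ∀ v : Fin 6, v ∉ [0] →
          (∀ c : Fin 6, c ∉ [0] → N4 c p ≤ N4 v p) →
          (∀ p'' ∈ ({0,1,3} : Finset (Fin 4)), ∃ c : Fin 6, c ∉ [0] ∧ N4 v p ≤ N4 c p'') →
          p = 1 ∧ v = 1 := by decide
      obtain ⟨p, hpR, hmin, hbest, hbnd⟩ := stepLemma hr h1 h3 ({2} : Finset (Fin 4)) ({0,1,3} : Finset (Fin 4)) (by decide) hlt1 ⟨0, by decide⟩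
      have hpne1_0 : p ≠ 2 := fun h => absurd (h ▸ hpR) (by decide)
      have hvne1_0 : π p ≠ 0 := by
        rw [← hval2]; exact fun h => hpne1_0 (hinj h)
      have hvE1 : π p ∉ [0] := by
        intro hmem
        rcases List.mem_cons.mp hmem with h | hmem
        · exact hvne1_0 h
        exact List.not_mem_nil hmem
      have hbest1 : ∀ c : Fin 6, c ∉ [0] → N4 c p ≤ N4 (π p) p := by
        intro c hcE
        apply hbest
        intro q hq
        fin_cases hq
        · rw [hval2]; intro h; exact hcE (by rw [h]; decide)
      have hbnd1 : ∀ p'' ∈ ({0,1,3} : Finset (Fin 4)), ∃ c : Fin 6, c ∉ [0] ∧ N4 (π p) p ≤ N4 c p'' := by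
        intro p'' hp''
        obtain ⟨c, hcg, hcb⟩ := hbnd p'' hp''
        refine ⟨c, ?_, hcb⟩
        intro hmem
        have hx0 : c ≠ 0 := by
          have := hcg 2 (by decide); rwa [hval2] at this
        rcases List.mem_cons.mp hmem with h | hmem
        · exact hx0 h
        exact List.not_mem_nil hmem
      obtain ⟨hpeq, hval1⟩ := key1 p hpR (π p) hvE1 hbest1 hbnd1
      subst hpeq
      have hlt2 : ∀ q ∈ ({2,1} : Finset (Fin 4)), ∀ p' ∈ ({0,3} : Finset (Fin 4)), r q < r p' := by
        intro q hq p' hp'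
        have hp'R : p' ∈ ({0,1,3} : Finset (Fin 4)) := Finset.mem_of_subset (by decide) hp'
        have hp'ne : p' ≠ 1 := fun h => absurd (h ▸ hp') (by decide)
        fin_cases hq
        · exact hlt1 2 (by decide) p' hp'R
        · exact hmin p' hp'R hp'ne
      clear hmin hbest hbnd hpR
      have key2 : ∀ p ∈ ({0,3} : Finset (Fin 4)), ∀ v : Fin 6, v ∉ [0,1] →
          (∀ c : Fin 6, c ∉ [0,1] → N4 c p ≤ N4 v p) →
          (∀ p'' ∈ ({0,3} : Finset (Fin 4)), ∃ c : Fin 6, c ∉ [0,1] ∧ N4 v p ≤ N4 c p'') →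
          p = 3 ∧ v = 2 := by decide
      obtain ⟨p, hpR, hmin, hbest, hbnd⟩ := stepLemma hr h1 h3 ({2,1} : Finset (Fin 4)) ({0,3} : Finset (Fin 4)) (by decide) hlt2 ⟨0, by decide⟩
      have hpne2_0 : p ≠ 2 := fun h => absurd (h ▸ hpR) (by decide)
      have hvne2_0 : π p ≠ 0 := by
        rw [← hval2]; exact fun h => hpne2_0 (hinj h)
      have hpne2_1 : p ≠ 1 := fun h => absurd (h ▸ hpR) (by decide)
      have hvne2_1 : π p ≠ 1 := by
        rw [← hval1]; exact fun h => hpne2_1 (hinj h)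
      have hvE2 : π p ∉ [0,1] := by
        intro hmem
        rcases List.mem_cons.mp hmem with h | hmem
        · exact hvne2_0 h
        rcases List.mem_cons.mp hmem with h | hmem
        · exact hvne2_1 h
        exact List.not_mem_nil hmem
      have hbest2 : ∀ c : Fin 6, c ∉ [0,1] → N4 c p ≤ N4 (π p) p := by
        intro c hcE
        apply hbest
        intro q hq
        fin_cases hq
        · rw [hval2]; intro h; exact hcE (by rw [h]; decide)
        · rw [hval1]; intro h; exact hcE (by rw [h]; decide)
      have hbnd2 : ∀ p'' ∈ ({0,3} : Finset (Fin 4)), ∃ c : Fin 6, c ∉ [0,1] ∧ N4 (π p) p ≤ N4 c p'' := by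
        intro p'' hp''
        obtain ⟨c, hcg, hcb⟩ := hbnd p'' hp''
        refine ⟨c, ?_, hcb⟩
        intro hmem
        have hx0 : c ≠ 0 := by
          have := hcg 2 (by decide); rwa [hval2] at this
        have hx1 : c ≠ 1 := by
          have := hcg 1 (by decide); rwa [hval1] at this
        rcases List.mem_cons.mp hmem with h | hmem
        · exact hx0 h
        rcases List.mem_cons.mp hmem with h | hmem
        · exact hx1 h
        exact List.not_mem_nil hmem
      obtain ⟨hpeq, hval3⟩ := key2 p hpR (π p) hvE2 hbest2 hbnd2
      subst hpeq
      have hlt3 : ∀ q ∈ ({2,1,3} : Finset (Fin 4)), ∀ p' ∈ ({0} : Finset (Fin 4)), r q < r p' := by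
        intro q hq p' hp'
        have hp'R : p' ∈ ({0,3} : Finset (Fin 4)) := Finset.mem_of_subset (by decide) hp'
        have hp'ne : p' ≠ 3 := fun h => absurd (h ▸ hp') (by decide)
        fin_cases hq
        · exact hlt2 2 (by decide) p' hp'R
        · exact hlt2 1 (by decide) p' hp'R
        · exact hmin p' hp'R hp'ne
      clear hmin hbest hbnd hpR
      have key3 : ∀ p ∈ ({0} : Finset (Fin 4)), ∀ v : Fin 6, v ∉ [0,1,2] →
          (∀ c : Fin 6, c ∉ [0,1,2] → N4 c p ≤ N4 v p) →
          (∀ p'' ∈ ({0} : Finset (Fin 4)), ∃ c : Fin 6, c ∉ [0,1,2] ∧ N4 v p ≤ N4 c p'') →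
          p = 0 ∧ v = 3 := by decide
      obtain ⟨p, hpR, hmin, hbest, hbnd⟩ := stepLemma hr h1 h3 ({2,1,3} : Finset (Fin 4)) ({0} : Finset (Fin 4)) (by decide) hlt3 ⟨0, by decide⟩
      have hpne3_0 : p ≠ 2 := fun h => absurd (h ▸ hpR) (by decide)
      have hvne3_0 : π p ≠ 0 := by
        rw [← hval2]; exact fun h => hpne3_0 (hinj h)
      have hpne3_1 : p ≠ 1 := fun h => absurd (h ▸ hpR) (by decide)
      have hvne3_1 : π p ≠ 1 := by
        rw [← hval1]; exact fun h => hpne3_1 (hinj h)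
      have hpne3_2 : p ≠ 3 := fun h => absurd (h ▸ hpR) (by decide)
      have hvne3_2 : π p ≠ 2 := by
        rw [← hval3]; exact fun h => hpne3_2 (hinj h)
      have hvE3 : π p ∉ [0,1,2] := by
        intro hmem
        rcases List.mem_cons.mp hmem with h | hmem
        · exact hvne3_0 h
        rcases List.mem_cons.mp hmem with h | hmem
        · exact hvne3_1 h
        rcases List.mem_cons.mp hmem with h | hmem
        · exact hvne3_2 h
        exact List.not_mem_nil hmem
      have hbest3 : ∀ c : Fin 6, c ∉ [0,1,2] → N4 c p ≤ N4 (π p) p := by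
        intro c hcE
        apply hbest
        intro q hq
        fin_cases hq
        · rw [hval2]; intro h; exact hcE (by rw [h]; decide)
        · rw [hval1]; intro h; exact hcE (by rw [h]; decide)
        · rw [hval3]; intro h; exact hcE (by rw [h]; decide)
      have hbnd3 : ∀ p'' ∈ ({0} : Finset (Fin 4)), ∃ c : Fin 6, c ∉ [0,1,2] ∧ N4 (π p) p ≤ N4 c p'' := by
        intro p'' hp''
        obtain ⟨c, hcg, hcb⟩ := hbnd p'' hp''
        refine ⟨c, ?_, hcb⟩
        intro hmem
        have hx0 : c ≠ 0 := by
          have := hcg 2 (by decide); rwa [hval2] at this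
        have hx1 : c ≠ 1 := by
          have := hcg 1 (by decide); rwa [hval1] at this
        have hx2 : c ≠ 2 := by
          have := hcg 3 (by decide); rwa [hval3] at this
        rcases List.mem_cons.mp hmem with h | hmem
        · exact hx0 h
        rcases List.mem_cons.mp hmem with h | hmem
        · exact hx1 h
        rcases List.mem_cons.mp hmem with h | hmem
        · exact hx2 h
        exact List.not_mem_nil hmem
      obtain ⟨hpeq, hval0⟩ := key3 p hpR (π p) hvE3 hbest3 hbnd3
      subst hpeq
      clear hmin hbest hbnd hpR
      funext q
      fin_cases q
      · exact hval0
      · exact hval1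
      · exact hval2
      · exact hval3
    · rintro rfl
      refine ⟨fun p => (![3,1,0,2] : Fin 4 → ℕ) p, by decide, by decide, ?_, ?_⟩
      · have H : ∀ p, ∀ c, (∀ p', (![3,1,0,2] : Fin 4 → ℕ) p' < (![3,1,0,2] : Fin 4 → ℕ) p → c ≠ (![3,1,0,2] : Fin 4 → Fin 6) p') → N4 c p ≤ N4 ((![3,1,0,2] : Fin 4 → Fin 6) p) p := by decide
        intro p c g
        simp only [S4q]
        exact_mod_cast H p c g
      · have H : ∀ p p'', (![3,1,0,2] : Fin 4 → ℕ) p ≤ (![3,1,0,2] : Fin 4 → ℕ) p'' → ∃ c, (∀ p', (![3,1,0,2] : Fin 4 → ℕ) p' < (![3,1,0,2] : Fin 4 → ℕ) p → c ≠ (![3,1,0,2] : Fin 4 → Fin 6) p') ∧ N4 ((![3,1,0,2] : Fin 4 → Fin 6) p) p ≤ N4 c p'' := by decide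
        intro p p'' h
        obtain ⟨c, g, hb⟩ := H p p'' h
        exact ⟨c, g, by simp only [S4q]; exact_mod_cast hb⟩
  · intro π
    constructor
    · rintro ⟨r, hr, hinj, h1q, h3q⟩
      simp only [S5q] at h1q h3q
      have h1 : ∀ p, ∀ c, (∀ p', r p' < r p → c ≠ π p') → N5 c p ≤ N5 (π p) p := by
        intro p c g; exact_mod_cast h1q p c g
      have h3 : ∀ p p'', r p ≤ r p'' → ∃ c, (∀ p', r p' < r p → c ≠ π p') ∧ N5 (π p) p ≤ N5 c p'' := by
        intro p p'' h
        obtain ⟨c, g, hb⟩ := h3q p p'' h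
        exact ⟨c, g, by exact_mod_cast hb⟩
      have hlt0 : ∀ q ∈ (∅ : Finset (Fin 5)), ∀ p ∈ ({0,1,2,3,4} : Finset (Fin 5)), r q < r p := by
        intro q hq; exact absurd hq (Finset.notMem_empty q)
      have key0 : ∀ p ∈ ({0,1,2,3,4} : Finset (Fin 5)), ∀ v : Fin 6, v ∉ ([] : List (Fin 6)) →
          (∀ c : Fin 6, c ∉ ([] : List (Fin 6)) → N5 c p ≤ N5 v p) →
          (∀ p'' ∈ ({0,1,2,3,4} : Finset (Fin 5)), ∃ c : Fin 6, c ∉ ([] : List (Fin 6)) ∧ N5 v p ≤ N5 c p'') →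
          p = 4 ∧ v = 2 := by decide
      obtain ⟨p, hpR, hmin, hbest, hbnd⟩ := stepLemma hr h1 h3 (∅ : Finset (Fin 5)) ({0,1,2,3,4} : Finset (Fin 5)) (by decide) hlt0 ⟨0, by decide⟩
      have hvE0 : π p ∉ ([] : List (Fin 6)) := List.not_mem_nil
      have hbest0 : ∀ c : Fin 6, c ∉ ([] : List (Fin 6)) → N5 c p ≤ N5 (π p) p := by
        intro c hcE
        apply hbest
        intro q hq
        exact absurd hq (Finset.notMem_empty q)
      have hbnd0 : ∀ p'' ∈ ({0,1,2,3,4} : Finset (Fin 5)), ∃ c : Fin 6, c ∉ ([] : List (Fin 6)) ∧ N5 (π p) p ≤ N5 c p'' := by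
        intro p'' hp''
        obtain ⟨c, hcg, hcb⟩ := hbnd p'' hp''
        refine ⟨c, ?_, hcb⟩
        exact List.not_mem_nil
      obtain ⟨hpeq, hval4⟩ := key0 p hpR (π p) hvE0 hbest0 hbnd0
      subst hpeq
      have hlt1 : ∀ q ∈ ({4} : Finset (Fin 5)), ∀ p' ∈ ({0,1,2,3} : Finset (Fin 5)), r q < r p' := by
        intro q hq p' hp'
        have hp'R : p' ∈ ({0,1,2,3,4} : Finset (Fin 5)) := Finset.mem_of_subset (by decide) hp'
        have hp'ne : p' ≠ 4 := fun h => absurd (h ▸ hp') (by decide)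
        fin_cases hq
        · exact hmin p' hp'R hp'ne
      clear hmin hbest hbnd hpR
      have key1 : ∀ p ∈ ({0,1,2,3} : Finset (Fin 5)), ∀ v : Fin 6, v ∉ [2] →
          (∀ c : Fin 6, c ∉ [2] → N5 c p ≤ N5 v p) →
          (∀ p'' ∈ ({0,1,2,3} : Finset (Fin 5)), ∃ c : Fin 6, c ∉ [2] ∧ N5 v p ≤ N5 c p'') →
          p = 3 ∧ v = 4 := by decide
      obtain ⟨p, hpR, hmin, hbest, hbnd⟩ := stepLemma hr h1 h3 ({4} : Finset (Fin 5)) ({0,1,2,3} : Finset (Fin 5)) (by decide) hlt1 ⟨0, by decide⟩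
      have hpne1_0 : p ≠ 4 := fun h => absurd (h ▸ hpR) (by decide)
      have hvne1_0 : π p ≠ 2 := by
        rw [← hval4]; exact fun h => hpne1_0 (hinj h)
      have hvE1 : π p ∉ [2] := by
        intro hmem
        rcases List.mem_cons.mp hmem with h | hmem
        · exact hvne1_0 h
        exact List.not_mem_nil hmem
      have hbest1 : ∀ c : Fin 6, c ∉ [2] → N5 c p ≤ N5 (π p) p := by
        intro c hcE
        apply hbest
        intro q hq
        fin_cases hq
        · rw [hval4]; intro h; exact hcE (by rw [h]; decide)
      have hbnd1 : ∀ p'' ∈ ({0,1,2,3} : Finset (Fin 5)), ∃ c : Fin 6, c ∉ [2] ∧ N5 (π p) p ≤ N5 c p'' := by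
        intro p'' hp''
        obtain ⟨c, hcg, hcb⟩ := hbnd p'' hp''
        refine ⟨c, ?_, hcb⟩
        intro hmem
        have hx0 : c ≠ 2 := by
          have := hcg 4 (by decide); rwa [hval4] at this
        rcases List.mem_cons.mp hmem with h | hmem
        · exact hx0 h
        exact List.not_mem_nil hmem
      obtain ⟨hpeq, hval3⟩ := key1 p hpR (π p) hvE1 hbest1 hbnd1
      subst hpeq
      have hlt2 : ∀ q ∈ ({4,3} : Finset (Fin 5)), ∀ p' ∈ ({0,1,2} : Finset (Fin 5)), r q < r p' := by
        intro q hq p' hp'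
        have hp'R : p' ∈ ({0,1,2,3} : Finset (Fin 5)) := Finset.mem_of_subset (by decide) hp'
        have hp'ne : p' ≠ 3 := fun h => absurd (h ▸ hp') (by decide)
        fin_cases hq
        · exact hlt1 4 (by decide) p' hp'R
        · exact hmin p' hp'R hp'ne
      clear hmin hbest hbnd hpR
      have key2 : ∀ p ∈ ({0,1,2} : Finset (Fin 5)), ∀ v : Fin 6, v ∉ [2,4] →
          (∀ c : Fin 6, c ∉ [2,4] → N5 c p ≤ N5 v p) →
          (∀ p'' ∈ ({0,1,2} : Finset (Fin 5)), ∃ c : Fin 6, c ∉ [2,4] ∧ N5 v p ≤ N5 c p'') →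
          p = 0 ∧ v = 1 := by decide
      obtain ⟨p, hpR, hmin, hbest, hbnd⟩ := stepLemma hr h1 h3 ({4,3} : Finset (Fin 5)) ({0,1,2} : Finset (Fin 5)) (by decide) hlt2 ⟨0, by decide⟩
      have hpne2_0 : p ≠ 4 := fun h => absurd (h ▸ hpR) (by decide)
      have hvne2_0 : π p ≠ 2 := by
        rw [← hval4]; exact fun h => hpne2_0 (hinj h)
      have hpne2_1 : p ≠ 3 := fun h => absurd (h ▸ hpR) (by decide)
      have hvne2_1 : π p ≠ 4 := by
        rw [← hval3]; exact fun h => hpne2_1 (hinj h)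
      have hvE2 : π p ∉ [2,4] := by
        intro hmem
        rcases List.mem_cons.mp hmem with h | hmem
        · exact hvne2_0 h
        rcases List.mem_cons.mp hmem with h | hmem
        · exact hvne2_1 h
        exact List.not_mem_nil hmem
      have hbest2 : ∀ c : Fin 6, c ∉ [2,4] → N5 c p ≤ N5 (π p) p := by
        intro c hcE
        apply hbest
        intro q hq
        fin_cases hq
        · rw [hval4]; intro h; exact hcE (by rw [h]; decide)
        · rw [hval3]; intro h; exact hcE (by rw [h]; decide)
      have hbnd2 : ∀ p'' ∈ ({0,1,2} : Finset (Fin 5)), ∃ c : Fin 6, c ∉ [2,4] ∧ N5 (π p) p ≤ N5 c p'' := by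
        intro p'' hp''
        obtain ⟨c, hcg, hcb⟩ := hbnd p'' hp''
        refine ⟨c, ?_, hcb⟩
        intro hmem
        have hx0 : c ≠ 2 := by
          have := hcg 4 (by decide); rwa [hval4] at this
        have hx1 : c ≠ 4 := by
          have := hcg 3 (by decide); rwa [hval3] at this
        rcases List.mem_cons.mp hmem with h | hmem
        · exact hx0 h
        rcases List.mem_cons.mp hmem with h | hmem
        · exact hx1 h
        exact List.not_mem_nil hmem
      obtain ⟨hpeq, hval0⟩ := key2 p hpR (π p) hvE2 hbest2 hbnd2
      subst hpeq
      have hlt3 : ∀ q ∈ ({4,3,0} : Finset (Fin 5)), ∀ p' ∈ ({1,2} : Finset (Fin 5)), r q < r p' := by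
        intro q hq p' hp'
        have hp'R : p' ∈ ({0,1,2} : Finset (Fin 5)) := Finset.mem_of_subset (by decide) hp'
        have hp'ne : p' ≠ 0 := fun h => absurd (h ▸ hp') (by decide)
        fin_cases hq
        · exact hlt2 4 (by decide) p' hp'R
        · exact hlt2 3 (by decide) p' hp'R
        · exact hmin p' hp'R hp'ne
      clear hmin hbest hbnd hpR
      have key3 : ∀ p ∈ ({1,2} : Finset (Fin 5)), ∀ v : Fin 6, v ∉ [2,4,1] →
          (∀ c : Fin 6, c ∉ [2,4,1] → N5 c p ≤ N5 v p) →
          (∀ p'' ∈ ({1,2} : Finset (Fin 5)), ∃ c : Fin 6, c ∉ [2,4,1] ∧ N5 v p ≤ N5 c p'') →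
          p = 2 ∧ v = 0 := by decide
      obtain ⟨p, hpR, hmin, hbest, hbnd⟩ := stepLemma hr h1 h3 ({4,3,0} : Finset (Fin 5)) ({1,2} : Finset (Fin 5)) (by decide) hlt3 ⟨1, by decide⟩
      have hpne3_0 : p ≠ 4 := fun h => absurd (h ▸ hpR) (by decide)
      have hvne3_0 : π p ≠ 2 := by
        rw [← hval4]; exact fun h => hpne3_0 (hinj h)
      have hpne3_1 : p ≠ 3 := fun h => absurd (h ▸ hpR) (by decide)
      have hvne3_1 : π p ≠ 4 := by
        rw [← hval3]; exact fun h => hpne3_1 (hinj h)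
      have hpne3_2 : p ≠ 0 := fun h => absurd (h ▸ hpR) (by decide)
      have hvne3_2 : π p ≠ 1 := by
        rw [← hval0]; exact fun h => hpne3_2 (hinj h)
      have hvE3 : π p ∉ [2,4,1] := by
        intro hmem
        rcases List.mem_cons.mp hmem with h | hmem
        · exact hvne3_0 h
        rcases List.mem_cons.mp hmem with h | hmem
        · exact hvne3_1 h
        rcases List.mem_cons.mp hmem with h | hmem
        · exact hvne3_2 h
        exact List.not_mem_nil hmem
      have hbest3 : ∀ c : Fin 6, c ∉ [2,4,1] → N5 c p ≤ N5 (π p) p := by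
        intro c hcE
        apply hbest
        intro q hq
        fin_cases hq
        · rw [hval4]; intro h; exact hcE (by rw [h]; decide)
        · rw [hval3]; intro h; exact hcE (by rw [h]; decide)
        · rw [hval0]; intro h; exact hcE (by rw [h]; decide)
      have hbnd3 : ∀ p'' ∈ ({1,2} : Finset (Fin 5)), ∃ c : Fin 6, c ∉ [2,4,1] ∧ N5 (π p) p ≤ N5 c p'' := by
        intro p'' hp''
        obtain ⟨c, hcg, hcb⟩ := hbnd p'' hp''
        refine ⟨c, ?_, hcb⟩
        intro hmem
        have hx0 : c ≠ 2 := by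
          have := hcg 4 (by decide); rwa [hval4] at this
        have hx1 : c ≠ 4 := by
          have := hcg 3 (by decide); rwa [hval3] at this
        have hx2 : c ≠ 1 := by
          have := hcg 0 (by decide); rwa [hval0] at this
        rcases List.mem_cons.mp hmem with h | hmem
        · exact hx0 h
        rcases List.mem_cons.mp hmem with h | hmem
        · exact hx1 h
        rcases List.mem_cons.mp hmem with h | hmem
        · exact hx2 h
        exact List.not_mem_nil hmem
      obtain ⟨hpeq, hval2⟩ := key3 p hpR (π p) hvE3 hbest3 hbnd3
      subst hpeq
      have hlt4 : ∀ q ∈ ({4,3,0,2} : Finset (Fin 5)), ∀ p' ∈ ({1} : Finset (Fin 5)), r q < r p' := by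
        intro q hq p' hp'
        have hp'R : p' ∈ ({1,2} : Finset (Fin 5)) := Finset.mem_of_subset (by decide) hp'
        have hp'ne : p' ≠ 2 := fun h => absurd (h ▸ hp') (by decide)
        fin_cases hq
        · exact hlt3 4 (by decide) p' hp'R
        · exact hlt3 3 (by decide) p' hp'R
        · exact hlt3 0 (by decide) p' hp'R
        · exact hmin p' hp'R hp'ne
      clear hmin hbest hbnd hpR
      have key4 : ∀ p ∈ ({1} : Finset (Fin 5)), ∀ v : Fin 6, v ∉ [2,4,1,0] →
          (∀ c : Fin 6, c ∉ [2,4,1,0] → N5 c p ≤ N5 v p) →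
          (∀ p'' ∈ ({1} : Finset (Fin 5)), ∃ c : Fin 6, c ∉ [2,4,1,0] ∧ N5 v p ≤ N5 c p'') →
          p = 1 ∧ v = 5 := by decide
      obtain ⟨p, hpR, hmin, hbest, hbnd⟩ := stepLemma hr h1 h3 ({4,3,0,2} : Finset (Fin 5)) ({1} : Finset (Fin 5)) (by decide) hlt4 ⟨1, by decide⟩
      have hpne4_0 : p ≠ 4 := fun h => absurd (h ▸ hpR) (by decide)
      have hvne4_0 : π p ≠ 2 := by
        rw [← hval4]; exact fun h => hpne4_0 (hinj h)
      have hpne4_1 : p ≠ 3 := fun h => absurd (h ▸ hpR) (by decide)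
      have hvne4_1 : π p ≠ 4 := by
        rw [← hval3]; exact fun h => hpne4_1 (hinj h)
      have hpne4_2 : p ≠ 0 := fun h => absurd (h ▸ hpR) (by decide)
      have hvne4_2 : π p ≠ 1 := by
        rw [← hval0]; exact fun h => hpne4_2 (hinj h)
      have hpne4_3 : p ≠ 2 := fun h => absurd (h ▸ hpR) (by decide)
      have hvne4_3 : π p ≠ 0 := by
        rw [← hval2]; exact fun h => hpne4_3 (hinj h)
      have hvE4 : π p ∉ [2,4,1,0] := by
        intro hmem
        rcases List.mem_cons.mp hmem with h | hmem
        · exact hvne4_0 h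
        rcases List.mem_cons.mp hmem with h | hmem
        · exact hvne4_1 h
        rcases List.mem_cons.mp hmem with h | hmem
        · exact hvne4_2 h
        rcases List.mem_cons.mp hmem with h | hmem
        · exact hvne4_3 h
        exact List.not_mem_nil hmem
      have hbest4 : ∀ c : Fin 6, c ∉ [2,4,1,0] → N5 c p ≤ N5 (π p) p := by
        intro c hcE
        apply hbest
        intro q hq
        fin_cases hq
        · rw [hval4]; intro h; exact hcE (by rw [h]; decide)
        · rw [hval3]; intro h; exact hcE (by rw [h]; decide)
        · rw [hval0]; intro h; exact hcE (by rw [h]; decide)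
        · rw [hval2]; intro h; exact hcE (by rw [h]; decide)
      have hbnd4 : ∀ p'' ∈ ({1} : Finset (Fin 5)), ∃ c : Fin 6, c ∉ [2,4,1,0] ∧ N5 (π p) p ≤ N5 c p'' := by
        intro p'' hp''
        obtain ⟨c, hcg, hcb⟩ := hbnd p'' hp''
        refine ⟨c, ?_, hcb⟩
        intro hmem
        have hx0 : c ≠ 2 := by
          have := hcg 4 (by decide); rwa [hval4] at this
        have hx1 : c ≠ 4 := by
          have := hcg 3 (by decide); rwa [hval3] at this
        have hx2 : c ≠ 1 := by
          have := hcg 0 (by decide); rwa [hval0] at this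
        have hx3 : c ≠ 0 := by
          have := hcg 2 (by decide); rwa [hval2] at this
        rcases List.mem_cons.mp hmem with h | hmem
        · exact hx0 h
        rcases List.mem_cons.mp hmem with h | hmem
        · exact hx1 h
        rcases List.mem_cons.mp hmem with h | hmem
        · exact hx2 h
        rcases List.mem_cons.mp hmem with h | hmem
        · exact hx3 h
        exact List.not_mem_nil hmem
      obtain ⟨hpeq, hval1⟩ := key4 p hpR (π p) hvE4 hbest4 hbnd4
      subst hpeq
      clear hmin hbest hbnd hpR
      funext q
      fin_cases q
      · exact hval0
      · exact hval1
      · exact hval2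
      · exact hval3
      · exact hval4
    · rintro rfl
      refine ⟨fun p => (![2,4,3,1,0] : Fin 5 → ℕ) p, by decide, by decide, ?_, ?_⟩
      · have H : ∀ p, ∀ c, (∀ p', (![2,4,3,1,0] : Fin 5 → ℕ) p' < (![2,4,3,1,0] : Fin 5 → ℕ) p → c ≠ (![1,5,0,4,2] : Fin 5 → Fin 6) p') → N5 c p ≤ N5 ((![1,5,0,4,2] : Fin 5 → Fin 6) p) p := by decide
        intro p c g
        simp only [S5q]
        exact_mod_cast H p c g
      · have H : ∀ p p'', (![2,4,3,1,0] : Fin 5 → ℕ) p ≤ (![2,4,3,1,0] : Fin 5 → ℕ) p'' → ∃ c, (∀ p', (![2,4,3,1,0] : Fin 5 → ℕ) p' < (![2,4,3,1,0] : Fin 5 → ℕ) p → c ≠ (![1,5,0,4,2] : Fin 5 → Fin 6) p') ∧ N5 ((![1,5,0,4,2] : Fin 5 → Fin 6) p) p ≤ N5 c p'' := by decide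
        intro p p'' h
        obtain ⟨c, g, hb⟩ := H p p'' h
        exact ⟨c, g, by simp only [S5q]; exact_mod_cast hb⟩
  · intro h
    have h3 : (3 : Fin 6) ∈ Set.range (![1,5,0,4,2] : Fin 5 → Fin 6) := h ⟨0, by decide⟩
    obtain ⟨q, hq⟩ := h3
    revert hq
    fin_cases q <;> decide
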